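/- Let (M,d) be a metric space and let (A,B,C) be a 2-partition of M. Define φ(x,y,z) = Σ_σ sgn(σ) 1_{D_{σ(0)}}(x) 1_{D_{σ(1)}}(y) 1_{D_{σ(2)}}(z), the sum over permutations σ of {0,1,2}, with (D_0,D_1,D_2) = (A,B,C). Then for every r > 0, the set {x ∈ M : ∃ y, z ∈ M with d(x,y) ≤ r, d(x,z) ≤ r, d(y,z) ≤ r, and φ(x,y,z) ≠ 0} is contained in A_r ∩ B_r ∩ C_r, and is therefore bounded. (Thus φ_{A,B,C} is a coarse 2-cochain: its support intersects every r-neighbourhood of the diagonal in a bounded set.) -/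
import Mathlib


open Metric Bornology Set

/-- A finite collection of subsets of a metric space is *coarsely transverse* if for every
`r > 0` the intersection of their `r`-thickenings is bounded. -/
def CoarselyTransverse {M : Type*} [MetricSpace M] {ι : Type*} (Z : ι → Set M) : Prop :=
  ∀ r : ℝ, 0 < r → IsBounded (⋂ i, cthickening r (Z i))

/-- A *2-partition* of `M`: three pairwise disjoint sets covering `M` which form a coarsely
transverse collection. -/
def IsTwoPartition {M : Type*} [MetricSpace M] (A B C : Set M) : Prop :=
  Disjoint A B ∧ Disjoint A C ∧ Disjoint B C ∧ A ∪ B ∪ C = univ ∧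
    CoarselyTransverse ![A, B, C]

/-- The cochain `φ_{A,B,C}` associated to a 2-partition is a coarse 2-cochain: its support
meets every `r`-neighbourhood of the diagonal in a subset of `A_r ∩ B_r ∩ C_r`, which is
bounded. -/
theorem partition_cochain_is_coarse {M : Type*} [MetricSpace M] (A B C : Set M)
    (h : IsTwoPartition A B C) (D : Fin 3 → Set M) (hD : D = ![A, B, C])
    (φ : M → M → M → ℤ)
    (hφ : ∀ x y z, φ x y z = ∑ σ : Equiv.Perm (Fin 3),
      (Equiv.Perm.sign σ : ℤ) * (D (σ 0)).indicator (fun _ => (1 : ℤ)) x *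
        (D (σ 1)).indicator (fun _ => (1 : ℤ)) y *
        (D (σ 2)).indicator (fun _ => (1 : ℤ)) z) :
    ∀ r : ℝ, 0 < r →
      {x : M | ∃ y z : M, dist x y ≤ r ∧ dist x z ≤ r ∧ dist y z ≤ r ∧ φ x y z ≠ 0} ⊆
          cthickening r A ∩ cthickening r B ∩ cthickening r C ∧
      IsBounded
        {x : M | ∃ y z : M, dist x y ≤ r ∧ dist x z ≤ r ∧ dist y z ≤ r ∧ φ x y z ≠ 0} := by
  intro r hr
  have hsub : {x : M | ∃ y z : M, dist x y ≤ r ∧ dist x z ≤ r ∧ dist y z ≤ r ∧ φ x y z ≠ 0} ⊆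
      ⋂ i, cthickening r (D i) := by
    rintro x ⟨y, z, hxy, hxz, _, hne⟩
    rw [hφ] at hne
    obtain ⟨σ, -, hσ⟩ := Finset.exists_ne_zero_of_sum_ne_zero hne
    have hx : x ∈ D (σ 0) := by
      by_contra hc
      simp [Set.indicator_of_notMem hc] at hσ
    have hy : y ∈ D (σ 1) := by
      by_contra hc
      simp [Set.indicator_of_notMem hc] at hσ
    have hz : z ∈ D (σ 2) := by
      by_contra hc
      simp [Set.indicator_of_notMem hc] at hσ
    refine Set.mem_iInter.2 fun i => ?_
    obtain ⟨j, rfl⟩ := σ.surjective i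
    fin_cases j
    · exact mem_cthickening_of_dist_le x x r _ hx (by simp [hr.le])
    · exact mem_cthickening_of_dist_le x y r _ hy hxy
    · exact mem_cthickening_of_dist_le x z r _ hz hxz
  have hiff : (⋂ i, cthickening r (D i)) =
      cthickening r A ∩ cthickening r B ∩ cthickening r C := by
    subst hD
    ext x
    simp [Set.mem_iInter, Fin.forall_fin_succ, and_assoc]
  constructor
  · rw [← hiff]; exact hsub
  · exact ((h.2.2.2.2 r hr).subset (by rw [← hD]; exact hsub))
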